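/- Let P, N > 0 and θ₀ ∈ (0, π/2]. Then there exists Δ₁ with 0 < Δ₁ < θ₀ such that h_{θ₀}(π/2 − Δ₁) ≤ (1/2) log((2P+N)/(P+N)) − P Δ₁ / (2(2P+N) ln 2). Consequently, min over ω ∈ (π/2 − θ₀, π/2] of h_{θ₀}(ω) is strictly less than (1/2) log((2P+N)/(P+N)). -/

import Mathlib

open Real

/-- The function `h_θ(ω)` from the relay-channel bound. -/
noncomputable def hFun (P N θ : ℝ) (ω : ℝ) : ℝ :=
  (1 / 2) * Real.logb 2 (4 * Real.sin (ω / 2) ^ 2 * (P + N - N * Real.sin (ω / 2) ^ 2) *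
    Real.sin θ ^ 2 / ((P + N) * (Real.sin θ ^ 2 - Real.cos ω ^ 2)))

set_option maxHeartbeats 1000000 in
/-- for `P, N > 0` and `θ₀ ∈ (0, π/2]`, there exists `Δ₁ ∈ (0, θ₀)` with
`h_{θ₀}(π/2 − Δ₁) ≤ (1/2) log₂((2P+N)/(P+N)) − P Δ₁/(2(2P+N) ln 2)`; consequently the
minimum of `h_{θ₀}` over `ω ∈ (π/2 − θ₀, π/2]` is strictly below
`(1/2) log₂((2P+N)/(P+N))`. -/
theorem stmt_13 (P N : ℝ) (hP : 0 < P) (hN : 0 < N)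
    (θ₀ : ℝ) (hθ₀ : θ₀ ∈ Set.Ioc 0 (π / 2)) :
    ∃ Δ₁ : ℝ, 0 < Δ₁ ∧ Δ₁ < θ₀ ∧
      hFun P N θ₀ (π / 2 - Δ₁) ≤
        (1 / 2) * Real.logb 2 ((2 * P + N) / (P + N)) -
          P * Δ₁ / (2 * (2 * P + N) * Real.log 2) ∧
      ∃ ω ∈ Set.Ioc (π / 2 - θ₀) (π / 2),
        hFun P N θ₀ ω < (1 / 2) * Real.logb 2 ((2 * P + N) / (P + N)) := by
  obtain ⟨hθ₀pos, hθ₀le⟩ := hθ₀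
  set t := Real.sin θ₀ with ht_def
  have ht : 0 < t := Real.sin_pos_of_pos_of_lt_pi hθ₀pos (lt_of_le_of_lt hθ₀le (by
    have := Real.pi_pos; linarith))
  have ht1 : t ≤ 1 := Real.sin_le_one θ₀
  set A : ℝ := 2 * P + N with hA_def
  have hA : 0 < A := by positivity
  set Δ : ℝ := min (P * t ^ 2 / (2 * A)) (min (t / 2) (min (1 / 2) (θ₀ / 2))) with hΔ_def
  have hΔpos : 0 < Δ := by
    apply lt_min (by positivity) (lt_min (by positivity) (lt_min (by norm_num) (by positivity)))
  have hΔ1 : Δ ≤ P * t ^ 2 / (2 * A) := min_le_left _ _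
  have hΔ2 : Δ ≤ t / 2 := le_trans (min_le_right _ _) (min_le_left _ _)
  have hΔ3 : Δ ≤ 1 / 2 := le_trans (min_le_right _ _) (le_trans (min_le_right _ _) (min_le_left _ _))
  have hΔ4 : Δ ≤ θ₀ / 2 := le_trans (min_le_right _ _) (le_trans (min_le_right _ _) (min_le_right _ _))
  have hΔθ : Δ < θ₀ := by linarith
  have hΔ1' : Δ * (2 * A) ≤ P * t ^ 2 := by
    rw [div_eq_mul_inv] at hΔ1
    calc Δ * (2 * A) ≤ (P * t ^ 2 * (2 * A)⁻¹) * (2 * A) := by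
          apply mul_le_mul_of_nonneg_right hΔ1 (by positivity)
      _ = P * t ^ 2 := by field_simp
  set s : ℝ := Real.sin Δ with hs_def
  have hs_pos : 0 < s := Real.sin_pos_of_pos_of_lt_pi hΔpos (by
    have := Real.pi_gt_three; linarith)
  have hs_lt : s < Δ := Real.sin_lt hΔpos
  have hs_gt : (3 / 4) * Δ ≤ s := by
    have h := Real.sin_gt_sub_cube hΔpos
    rw [← hs_def] at h
    nlinarith [sq_nonneg Δ]
  have hs_lt_t : s < t := by linarith
  -- trig simplification
  have hcos : Real.cos (π / 2 - Δ) = s := Real.cos_pi_div_two_sub Δ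
  have hsinsq : Real.sin ((π / 2 - Δ) / 2) ^ 2 = 1 / 2 - s / 2 := by
    rw [Real.sin_sq, Real.cos_sq]
    have h2 : 2 * ((π / 2 - Δ) / 2) = π / 2 - Δ := by ring
    rw [h2, hcos]
    ring
  clear_value t A Δ s
  -- the argument X of the log
  have hPN : 0 < P + N := by linarith
  have hts : 0 < t ^ 2 - s ^ 2 := by nlinarith
  have harg : 4 * Real.sin ((π / 2 - Δ) / 2) ^ 2 * (P + N - N * Real.sin ((π / 2 - Δ) / 2) ^ 2) *
      t ^ 2 / ((P + N) * (t ^ 2 - Real.cos (π / 2 - Δ) ^ 2))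
      = (1 - s) * (A + N * s) * t ^ 2 / ((P + N) * (t ^ 2 - s ^ 2)) := by
    rw [hsinsq, hcos, hA_def]; ring_nf
  have hs1 : s < 1 := by linarith
  have hnum_pos : 0 < (1 - s) * (A + N * s) * t ^ 2 := by
    have h1 : (0:ℝ) < 1 - s := by linarith
    have h2 : (0:ℝ) < A + N * s := by nlinarith
    positivity
  set R : ℝ := (1 - s) * (A + N * s) * t ^ 2 / (A * (t ^ 2 - s ^ 2)) with hR_def
  have hRpos : 0 < R := div_pos hnum_pos (by positivity)
  -- key polynomial bound
  have h1 : P * Δ * (t ^ 2 - s ^ 2) + s ^ 2 * (A - N * t ^ 2) ≤ 2 * P * t ^ 2 * s := by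
    have e1 : P * Δ * (t ^ 2 - s ^ 2) ≤ P * Δ * t ^ 2 := by
      nlinarith [mul_nonneg (mul_nonneg hP.le hΔpos.le) (sq_nonneg s)]
    have e2 : s ^ 2 * (A - N * t ^ 2) ≤ Δ ^ 2 * A := by
      have hANt : A - N * t ^ 2 ≤ A := by nlinarith [mul_pos hN (pow_pos ht 2)]
      have hs2 : s ^ 2 ≤ Δ ^ 2 := by nlinarith
      calc s ^ 2 * (A - N * t ^ 2) ≤ s ^ 2 * A := mul_le_mul_of_nonneg_left hANt (sq_nonneg s)
        _ ≤ Δ ^ 2 * A := mul_le_mul_of_nonneg_right hs2 hA.le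
    have e3 : Δ ^ 2 * A ≤ (1 / 2) * P * t ^ 2 * Δ := by
      have h := mul_le_mul_of_nonneg_left hΔ1' hΔpos.le
      nlinarith [h]
    have e4 : 2 * P * t ^ 2 * ((3 / 4) * Δ) ≤ 2 * P * t ^ 2 * s := by
      apply mul_le_mul_of_nonneg_left hs_gt (by positivity)
    linarith [e1, e2, e3, e4]
  have hR' : (1 - s) * (A + N * s) * t ^ 2 ≤ (A - P * Δ) * (t ^ 2 - s ^ 2) := by
    rw [hA_def] at h1 ⊢
    nlinarith [h1]
  have hR : R ≤ 1 - P * Δ / A := by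
    rw [hR_def, div_le_iff₀ (by positivity)]
    have heq : (1 - P * Δ / A) * (A * (t ^ 2 - s ^ 2)) = (A - P * Δ) * (t ^ 2 - s ^ 2) := by
      field_simp
    rw [heq]; exact hR'
  -- log bound
  have key : Real.log R ≤ -(P * Δ / A) := by
    have := Real.log_le_sub_one_of_pos hRpos
    linarith
  have hlog2 : 0 < Real.log 2 := Real.log_pos (by norm_num)
  have hXsplit : (1 - s) * (A + N * s) * t ^ 2 / ((P + N) * (t ^ 2 - s ^ 2))
      = (A / (P + N)) * R := by
    rw [hR_def]; field_simp
  have hmain : hFun P N θ₀ (π / 2 - Δ) ≤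
      (1 / 2) * Real.logb 2 (A / (P + N)) - P * Δ / (2 * A * Real.log 2) := by
    unfold hFun
    rw [← ht_def, harg, hXsplit]
    have hApn : 0 < A / (P + N) := by positivity
    rw [Real.logb, Real.logb, Real.log_mul (ne_of_gt hApn) (ne_of_gt hRpos)]
    have hq : Real.log R * A ≤ -(P * Δ) := by
      calc Real.log R * A ≤ (-(P * Δ / A)) * A := mul_le_mul_of_nonneg_right key hA.le
        _ = -(P * Δ) := by field_simp
    have expand : (1 / 2) * ((Real.log (A / (P + N)) + Real.log R) / Real.log 2) -
        ((1 / 2) * (Real.log (A / (P + N)) / Real.log 2) - P * Δ / (2 * A * Real.log 2))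
        = (Real.log R * A + P * Δ) / (2 * A * Real.log 2) := by
      field_simp; ring
    have hdiv : (Real.log R * A + P * Δ) / (2 * A * Real.log 2) ≤ 0 :=
      div_nonpos_of_nonpos_of_nonneg (by linarith) (by positivity)
    linarith [expand, hdiv]
  refine ⟨Δ, hΔpos, hΔθ, hmain, ⟨π / 2 - Δ, ⟨by linarith, by linarith⟩, ?_⟩⟩
  have hpos : 0 < P * Δ / (2 * A * Real.log 2) := by positivity
  linarith [hmain, hpos]
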